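/- Let (P_t)_{t≥0} be a sub-Markovian semigroup on E, ν a probability measure on E, and t₀ > 0, c₁, c₂ > 0 constants such that: (A1) for all x ∈ E and measurable A, P_x(X_{t₀} ∈ A) ≥ c₁ ν(A) P_x(t₀ < τ_∂); and (A2) for all z ∈ E, t ≥ 0, P_ν(t < τ_∂) ≥ c₂ P_z(t < τ_∂). Then for every probability measure μ on E and all t ≥ t₀: P_μ(t < τ_∂) ≥ c₁ c₂ P_μ(t₀ < τ_∂) · sup_{z∈E} P_z(t < τ_∂). -/

import Mathlib

open MeasureTheory

theorem survival_lower_bound_from_A1_A2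
    {E : Type*} [MeasurableSpace E]
    (t₀ c₁ c₂ : ℝ) (ht₀ : 0 < t₀) (hc₁ : 0 < c₁) (hc₂ : 0 < c₂)
    (ν : Measure E) [IsProbabilityMeasure ν]
    (P : ℝ → E → Measure E)
    (hP_meas : ∀ t, ∀ A : Set E, MeasurableSet A → Measurable (fun x => P t x A))
    (hP_sub : ∀ t, 0 ≤ t → ∀ x, P t x Set.univ ≤ 1)
    (h_semigroup : ∀ s t, 0 ≤ s → 0 ≤ t → ∀ x, ∀ A : Set E, MeasurableSet A →
      P (s + t) x A = ∫⁻ y, P t y A ∂(P s x))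
    (h_mono : ∀ s t, 0 ≤ s → s ≤ t → ∀ x, P t x Set.univ ≤ P s x Set.univ)
    (hA1 : ∀ x, ∀ A : Set E, MeasurableSet A →
      ENNReal.ofReal c₁ * ν A * P t₀ x Set.univ ≤ P t₀ x A)
    (hA2 : ∀ z : E, ∀ t, 0 ≤ t →
      ENNReal.ofReal c₂ * P t z Set.univ ≤ ∫⁻ x, P t x Set.univ ∂ν) :
    ∀ μ : Measure E, IsProbabilityMeasure μ → ∀ t, t₀ ≤ t →
      ENNReal.ofReal (c₁ * c₂) * (∫⁻ x, P t₀ x Set.univ ∂μ) *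
          (⨆ z : E, P t z Set.univ) ≤
        ∫⁻ x, P t x Set.univ ∂μ := by
  intro μ hμ t ht
  set s := t - t₀ with hs
  have hs0 : 0 ≤ s := by simp [hs]; linarith
  have hts : t = t₀ + s := by simp [hs]
  have hst : s ≤ t := by simp [hs]; linarith
  have hmeas : Measurable fun y => P s y Set.univ := hP_meas s _ MeasurableSet.univ
  -- sup bound from (A2) and monotonicity
  have hsup : ENNReal.ofReal c₂ * (⨆ z : E, P t z Set.univ)
      ≤ ∫⁻ x, P s x Set.univ ∂ν := by
    rw [ENNReal.mul_iSup]
    exact iSup_le fun z =>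
      le_trans (mul_le_mul_right (h_mono s t hs0 hst z) _) (hA2 z s hs0)
  -- pointwise bound
  have key : ∀ x, ENNReal.ofReal c₁ * ENNReal.ofReal c₂ * (⨆ z : E, P t z Set.univ)
      * P t₀ x Set.univ ≤ P t x Set.univ := by
    intro x
    have hsem : P t x Set.univ = ∫⁻ y, P s y Set.univ ∂(P t₀ x) := by
      rw [hts]; exact h_semigroup t₀ s ht₀.le hs0 x _ MeasurableSet.univ
    have hle : ((ENNReal.ofReal c₁ * P t₀ x Set.univ) • ν) ≤ P t₀ x := by
      rw [Measure.le_iff]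
      intro A hA
      have := hA1 x A hA
      simpa [Measure.smul_apply, smul_eq_mul, mul_comm, mul_assoc, mul_left_comm]
        using this
    have h2 : ENNReal.ofReal c₁ * P t₀ x Set.univ * ∫⁻ y, P s y Set.univ ∂ν
        ≤ P t x Set.univ := by
      rw [hsem]
      calc ENNReal.ofReal c₁ * P t₀ x Set.univ * ∫⁻ y, P s y Set.univ ∂ν
          = ∫⁻ y, P s y Set.univ ∂((ENNReal.ofReal c₁ * P t₀ x Set.univ) • ν) := by
            rw [lintegral_smul_measure, smul_eq_mul]
        _ ≤ ∫⁻ y, P s y Set.univ ∂(P t₀ x) := lintegral_mono' hle le_rfl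
    calc ENNReal.ofReal c₁ * ENNReal.ofReal c₂ * (⨆ z : E, P t z Set.univ)
          * P t₀ x Set.univ
        = ENNReal.ofReal c₁ * P t₀ x Set.univ *
            (ENNReal.ofReal c₂ * (⨆ z : E, P t z Set.univ)) := by ring
      _ ≤ ENNReal.ofReal c₁ * P t₀ x Set.univ * ∫⁻ y, P s y Set.univ ∂ν :=
          mul_le_mul_right hsup _
      _ ≤ P t x Set.univ := h2
  calc ENNReal.ofReal (c₁ * c₂) * (∫⁻ x, P t₀ x Set.univ ∂μ) *
        (⨆ z : E, P t z Set.univ)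
      = ∫⁻ x, ENNReal.ofReal c₁ * ENNReal.ofReal c₂ * (⨆ z : E, P t z Set.univ)
          * P t₀ x Set.univ ∂μ := by
        rw [lintegral_const_mul _ (hP_meas t₀ _ MeasurableSet.univ),
          ENNReal.ofReal_mul hc₁.le]
        ring
    _ ≤ ∫⁻ x, P t x Set.univ ∂μ := lintegral_mono key
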